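/- For every integer n ≥ 2: ∫_{-∞}^{∞} exp(-4πi·x) / (x + i)^n dx = (-4πi)^n · e^{-4π} / (2·(n-1)!), where (x + i)^n is the n-th power of the complex number x + i. -/

import Mathlib

open MeasureTheory Set Filter Real Complex FourierTransform
open scoped Topology

lemma aux_integrableOn_pow_exp {b : ℝ} (hb : 0 < b) (n : ℕ) :
    IntegrableOn (fun t : ℝ => t ^ n * Real.exp (-b * t)) (Ioi 0) := by
  have := integrableOn_rpow_mul_exp_neg_mul_rpow (p := 1) (s := n) (b := b)
    (by exact neg_one_lt_zero.trans_le (Nat.cast_nonneg n)) one_pos hb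
  refine this.congr_fun (fun t ht => ?_) measurableSet_Ioi
  rw [mem_Ioi] at ht
  simp only [Real.rpow_one, Real.rpow_natCast]

lemma aux_norm_eq {c : ℂ} (n : ℕ) {t : ℝ} (ht : 0 ≤ t) :
    ‖(t : ℂ) ^ n * Complex.exp (-(c * t))‖ = t ^ n * Real.exp (-c.re * t) := by
  rw [norm_mul, Complex.norm_exp]
  simp only [norm_pow, Complex.norm_real, Real.norm_eq_abs, _root_.abs_of_nonneg ht]
  simp [Complex.mul_re, neg_mul]

lemma aux_integrableOn_cpow_cexp {c : ℂ} (hc : 0 < c.re) (n : ℕ) :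
    IntegrableOn (fun t : ℝ => (t : ℂ) ^ n * Complex.exp (-(c * t))) (Ioi 0) := by
  refine (aux_integrableOn_pow_exp hc n).mono' ?_ ?_
  · exact (Continuous.aestronglyMeasurable (by fun_prop)).restrict
  · filter_upwards [ae_restrict_mem measurableSet_Ioi] with t ht
    rw [aux_norm_eq n (le_of_lt ht)]

lemma aux_cexp_tendsto {c : ℂ} (hc : 0 < c.re) (n : ℕ) :
    Tendsto (fun t : ℝ => (t : ℂ) ^ n * Complex.exp (-(c * t))) atTop (𝓝 0) := by
  apply squeeze_zero_norm' (a := fun t : ℝ => t ^ (n : ℝ) * Real.exp (-c.re * t))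
    ?_ (tendsto_rpow_mul_exp_neg_mul_atTop_nhds_zero _ _ hc)
  filter_upwards [eventually_ge_atTop (0:ℝ)] with t ht
  rw [aux_norm_eq n ht, Real.rpow_natCast]

lemma aux_laplace {c : ℂ} (hc : 0 < c.re) : ∀ n : ℕ,
    ∫ t in Ioi (0:ℝ), (t : ℂ) ^ n * Complex.exp (-(c * t)) = (Nat.factorial n : ℂ) / c ^ (n + 1) := by
  have hc0 : c ≠ 0 := fun h => by simp [h] at hc
  intro n
  induction n with
  | zero =>
    have hd : ∀ x ∈ Ici (0:ℝ), HasDerivAt (fun t : ℝ => Complex.exp (-(c * t)))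
        ((-c) * ((x:ℂ) ^ 0 * Complex.exp (-(c * x)))) x := by
      intro x _
      have h1 : HasDerivAt (fun t : ℝ => -(c * (t:ℂ))) (-c) x := by
        have := (((hasDerivAt_id (x:ℂ)).const_mul c).neg).comp_ofReal
        simpa using this
      have := h1.cexp
      convert this using 1
      ring
    have heq := integral_Ioi_of_hasDerivAt_of_tendsto' hd
      ((aux_integrableOn_cpow_cexp hc 0).const_mul (-c)) (m := 0) ?_
    · rw [MeasureTheory.integral_const_mul] at heq
      simp only [Complex.ofReal_zero, mul_zero, neg_zero, Complex.exp_zero, zero_sub] at heq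
      have h2 : (∫ t in Ioi (0:ℝ), (t:ℂ) ^ 0 * Complex.exp (-(c * t))) = 1 / c := by
        field_simp at heq ⊢
        linear_combination -heq
      simpa using h2
    · have h0 := aux_cexp_tendsto hc 0
      simp only [pow_zero, one_mul] at h0
      exact h0
  | succ n ih =>
    set E : ℝ → ℂ := fun t => Complex.exp (-(c * t)) with hE
    have hd : ∀ x ∈ Ici (0:ℝ), HasDerivAt
        (fun t : ℝ => (t:ℂ) ^ (n+1) * E t)
        (((n:ℂ)+1) * ((x:ℂ) ^ n * E x) + (-c) * ((x:ℂ) ^ (n+1) * E x)) x := by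
      intro x _
      have hr : HasDerivAt (fun t : ℝ => ((t:ℂ) ^ (n+1))) (((n:ℂ)+1) * (x:ℂ) ^ n) x := by
        have := (hasDerivAt_pow (n+1) ((x:ℂ))).comp_ofReal
        simpa using this
      have h1 : HasDerivAt (fun t : ℝ => -(c * (t:ℂ))) (-c) x := by
        have := (((hasDerivAt_id (x:ℂ)).const_mul c).neg).comp_ofReal
        simpa using this
      have := hr.mul h1.cexp
      refine this.congr_deriv ?_
      simp only [hE]
      ring
    have hint : IntegrableOn (fun x : ℝ => ((n:ℂ)+1) * ((x:ℂ) ^ n * E x)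
        + (-c) * ((x:ℂ) ^ (n+1) * E x)) (Ioi 0) :=
      ((aux_integrableOn_cpow_cexp hc n).const_mul _).add
        ((aux_integrableOn_cpow_cexp hc (n+1)).const_mul _)
    have heq := integral_Ioi_of_hasDerivAt_of_tendsto' hd hint (m := 0)
      (aux_cexp_tendsto hc (n+1))
    rw [MeasureTheory.integral_add ((aux_integrableOn_cpow_cexp hc n).const_mul _)
        ((aux_integrableOn_cpow_cexp hc (n+1)).const_mul _),
      MeasureTheory.integral_const_mul, MeasureTheory.integral_const_mul, ih] at heq
    simp only [Complex.ofReal_zero, zero_pow (Nat.succ_ne_zero n), zero_mul, sub_zero] at heq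
    have hfac : ((Nat.factorial (n+1) : ℂ)) = ((n:ℂ)+1) * (Nat.factorial n : ℂ) := by
      rw [Nat.factorial_succ]; push_cast; ring
    have hcp : c ^ (n+1) ≠ 0 := pow_ne_zero _ hc0
    have hcp2 : c ^ (n+2) ≠ 0 := pow_ne_zero _ hc0
    -- heq : (n+1) * (n!/c^(n+1)) + (-c) * I = 0
    have : (∫ t in Ioi (0:ℝ), (t:ℂ) ^ (n+1) * E t)
        = ((n:ℂ)+1) * ((Nat.factorial n : ℂ) / c ^ (n+1)) / c := by
      field_simp at heq ⊢
      linear_combination -heq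
    rw [this, hfac]
    rw [pow_succ, mul_div_assoc', div_div]
    first
    | rfl
    | (congr 1; ring)

lemma aux_integrableOn_neg {h : ℝ → ℂ} (hh : IntegrableOn (fun t => h (-t)) (Set.Ici (0:ℝ))) :
    IntegrableOn h (Set.Iic (0:ℝ)) := by
  have A : MeasurableEmbedding fun x : ℝ => -x :=
    (Homeomorph.neg ℝ).isClosedEmbedding.measurableEmbedding
  have hm : (volume : Measure ℝ) = Measure.map (fun x : ℝ => -x) volume := by
    simpa using (Measure.map_neg_eq_self (volume : Measure ℝ)).symm
  rw [IntegrableOn, hm, A.restrict_map, A.integrable_map_iff]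
  have hp : (fun x : ℝ => -x) ⁻¹' (Set.Iic 0) = Set.Ici 0 := by ext x; simp
  rw [hp]
  exact hh

noncomputable def auxC (n : ℕ) : ℂ := (-2*π*Complex.I)^n / (Nat.factorial (n-1) : ℂ)

noncomputable def auxTau (n : ℕ) : ℝ → ℂ :=
  fun t => auxC n * (-(t:ℂ))^(n-1) * Complex.exp (2*(π:ℂ)*t)

noncomputable def auxG (n : ℕ) : ℝ → ℂ := (Set.Iic (0:ℝ)).indicator (auxTau n)

lemma auxTau_integrableOn (n : ℕ) : IntegrableOn (auxTau n) (Set.Iic (0:ℝ)) := by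
  apply aux_integrableOn_neg
  apply (integrableOn_Ici_iff_integrableOn_Ioi).mpr
  have hc : (0:ℝ) < ((2*(π:ℝ) : ℝ) : ℂ).re := by simp [Real.pi_pos]
  refine IntegrableOn.congr_fun ((aux_integrableOn_cpow_cexp hc (n-1)).const_mul (auxC n))
    (fun t ht => ?_) measurableSet_Ioi
  simp only [auxTau]
  push_cast
  ring_nf

lemma auxG_integrable (n : ℕ) : Integrable (auxG n) :=
  (auxTau_integrableOn n).integrable_indicator measurableSet_Iic

lemma auxG_fourier (n : ℕ) (hn : 2 ≤ n) (w : ℝ) :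
    (𝓕 (auxG n)) w = 1 / ((w:ℂ) + Complex.I) ^ n := by
  have h1n : 1 ≤ n := le_trans one_le_two hn
  have hI : ((w:ℂ) + Complex.I) ≠ 0 := fun h => by simpa using congrArg Complex.im h
  have h2πI : (-2*(π:ℂ)*Complex.I) ≠ 0 := by
    simp [Real.pi_ne_zero, Complex.I_ne_zero, Complex.ofReal_ne_zero]
  have hfac : ((Nat.factorial (n-1) : ℂ)) ≠ 0 := by
    exact_mod_cast Nat.cast_ne_zero.mpr (Nat.factorial_ne_zero _)
  set c : ℂ := -2*(π:ℂ)*Complex.I * ((w:ℂ) + Complex.I) with hc_def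
  have hc_eq : c = 2*(π:ℂ) - 2*(π:ℂ)*w*Complex.I := by
    rw [hc_def]; ring_nf; rw [Complex.I_sq]; ring
  have hc_re : 0 < c.re := by
    rw [hc_eq]; simp [Complex.sub_re, Complex.mul_re, Real.pi_pos]
  rw [Real.fourier_real_eq_integral_exp_smul]
  have step1 : ∀ v : ℝ, Complex.exp (↑(-2 * π * v * w) * Complex.I) • auxG n v
      = (Set.Iic (0:ℝ)).indicator
        (fun v => Complex.exp (↑(-2 * π * v * w) * Complex.I) * auxTau n v) v := by
    intro v
    by_cases hv : v ∈ Set.Iic (0:ℝ) <;> simp [auxG, hv]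
  rw [MeasureTheory.integral_congr_ae (Filter.Eventually.of_forall step1),
    MeasureTheory.integral_indicator measurableSet_Iic]
  have hneg := integral_comp_neg_Ioi 0
    (fun v : ℝ => Complex.exp (↑(-2 * π * v * w) * Complex.I) * auxTau n v)
  rw [neg_zero] at hneg
  rw [← hneg]
  have step2 : ∀ v ∈ Set.Ioi (0:ℝ),
      Complex.exp (↑(-2 * π * (-v) * w) * Complex.I) * auxTau n (-v)
        = auxC n * ((v:ℂ)^(n-1) * Complex.exp (-(c * v))) := by
    intro v _
    simp only [auxTau]
    rw [show auxC n * (-((-v:ℝ):ℂ))^(n-1) * Complex.exp (2*(π:ℂ)*((-v:ℝ):ℂ))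
        = auxC n * ((v:ℂ))^(n-1) * Complex.exp (2*(π:ℂ)*((-v:ℝ):ℂ)) by push_cast; ring]
    rw [mul_comm (Complex.exp _) _, mul_assoc, mul_assoc, ← Complex.exp_add]
    congr 2
    rw [hc_eq]
    push_cast
    ring
  rw [MeasureTheory.setIntegral_congr_fun measurableSet_Ioi step2,
    MeasureTheory.integral_const_mul, aux_laplace hc_re (n-1),
    Nat.sub_add_cancel h1n]
  rw [hc_def, mul_pow, auxC]
  field_simp

lemma auxF_integrable (n : ℕ) (hn : 2 ≤ n) :
    Integrable (fun w : ℝ => 1 / ((w:ℂ) + Complex.I) ^ n) := by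
  have hI : ∀ w : ℝ, ((w:ℂ) + Complex.I) ≠ 0 := fun w h => by simpa using congrArg Complex.im h
  refine integrable_inv_one_add_sq.mono' ?_ ?_
  · refine Continuous.aestronglyMeasurable ?_
    have : Continuous fun w : ℝ => ((w:ℂ) + Complex.I) ^ n :=
      (Complex.continuous_ofReal.add continuous_const).pow n
    exact continuous_const.div this (fun w => pow_ne_zero _ (hI w))
  · refine Filter.Eventually.of_forall (fun w => ?_)
    rw [norm_div, norm_one, norm_pow]
    have habs : ‖(w:ℂ) + Complex.I‖^2 = 1 + w^2 := by
      rw [Complex.sq_norm]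
      simp [Complex.normSq_apply]
      ring
    have h1 : (1:ℝ) ≤ ‖(w:ℂ) + Complex.I‖ := by
      nlinarith [norm_nonneg ((w:ℂ) + Complex.I), sq_nonneg w]
    have h2 : (1 + w^2 : ℝ) ≤ ‖(w:ℂ) + Complex.I‖ ^ n := by
      calc (1 + w^2 : ℝ) = ‖(w:ℂ) + Complex.I‖^2 := habs.symm
        _ ≤ ‖(w:ℂ) + Complex.I‖ ^ n := pow_le_pow_right₀ h1 hn
    rw [one_div]
    exact inv_anti₀ (by positivity) h2

lemma auxG_continuousAt (n : ℕ) : ContinuousAt (auxG n) (-2) := by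
  have hmem : Set.Iio (0:ℝ) ∈ 𝓝 (-2 : ℝ) := Iio_mem_nhds (by norm_num)
  have hcτ : Continuous (auxTau n) := by
    unfold auxTau
    fun_prop
  refine hcτ.continuousAt.congr ?_
  filter_upwards [hmem] with t ht
  exact (Set.indicator_of_mem (Set.mem_Iic.mpr (le_of_lt (Set.mem_Iio.mp ht))) (auxTau n)).symm

theorem integral_exp_div_pow_add_I (n : ℕ) (hn : 2 ≤ n) :
    (∫ x : ℝ, Complex.exp (-(4 * (Real.pi : ℂ)) * Complex.I * (x : ℂ)) /
        ((x : ℂ) + Complex.I) ^ n) =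
      (-(4 * (Real.pi : ℂ)) * Complex.I) ^ n * Complex.exp (-(4 * (Real.pi : ℂ))) /
        (2 * (Nat.factorial (n - 1) : ℂ)) := by
  have h1n : 1 ≤ n := le_trans one_le_two hn
  set f : ℝ → ℂ := fun w : ℝ => 1 / ((w:ℂ) + Complex.I) ^ n with hf_def
  have hFg : 𝓕 (auxG n) = f := funext (auxG_fourier n hn)
  have hinv : 𝓕⁻ (𝓕 (auxG n)) (-2 : ℝ) = auxG n (-2) :=
    (auxG_integrable n).fourierInv_fourier_eq (hFg ▸ auxF_integrable n hn) (auxG_continuousAt n)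
  rw [hFg] at hinv
  rw [Real.fourierInv_eq_fourier_neg, neg_neg] at hinv
  have hlhs : (∫ x : ℝ, Complex.exp (-(4 * (Real.pi : ℂ)) * Complex.I * (x : ℂ)) /
      ((x : ℂ) + Complex.I) ^ n) = 𝓕 f (2 : ℝ) := by
    rw [Real.fourier_real_eq_integral_exp_smul]
    refine MeasureTheory.integral_congr_ae (Filter.Eventually.of_forall (fun v => ?_))
    simp only [hf_def, smul_eq_mul, mul_one_div]
    congr 2
    push_cast
    ring
  rw [hlhs, hinv]
  -- evaluate g(-2)
  rw [auxG, Set.indicator_of_mem (by norm_num : (-2:ℝ) ∈ Set.Iic (0:ℝ)), auxTau, auxC]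
  have hfac : ((Nat.factorial (n-1) : ℂ)) ≠ 0 :=
    Nat.cast_ne_zero.mpr (Nat.factorial_ne_zero _)
  have hexp : Complex.exp (2*(π:ℂ)*((-2:ℝ):ℂ)) = Complex.exp (-(4 * (Real.pi : ℂ))) := by
    congr 1; push_cast; ring
  have hbase : (-((-2:ℝ):ℂ)) = (2:ℂ) := by push_cast; ring
  rw [hexp, hbase]
  have hpow : (-(4 * (Real.pi : ℂ)) * Complex.I) ^ n = (-2*(π:ℂ)*Complex.I)^n * 2^n := by
    rw [← mul_pow]; congr 1; ring
  have h2n : (2:ℂ)^n = 2^(n-1) * 2 := by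
    conv_lhs => rw [← Nat.sub_add_cancel h1n]
    rw [pow_succ]
  rw [hpow, h2n]
  field_simp
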